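/- Let A be an n×n strictly accretive matrix that is not Hermitian. Then the block matrix [[A, I],[I, A⁻¹]] is not accretive. -/

import Mathlib

open MeasureTheory Matrix
open scoped ComplexOrder

/-- The "real part" (Hermitian part) of a complex matrix: `(A + Aᴴ)/2`. -/
noncomputable def mre {m : Type*} (A : Matrix m m ℂ) : Matrix m m ℂ :=
  (1/2 : ℂ) • (A + Aᴴ)

/-- A matrix is accretive if its Hermitian part is positive semidefinite. -/
def Accretive {m : Type*} [Fintype m] (A : Matrix m m ℂ) : Prop :=
  (mre A).PosSemidef

/-- Principal fractional power `A ^ t` of a matrix whose spectrum avoids `(-∞, 0]`,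
given (for `0 < t < 1`) by the standard integral formula
`A^t = (sin (tπ)/π) ∫₀^∞ s^(t-1) A (A + s I)⁻¹ ds`. -/
noncomputable def apow {m : Type*} [Fintype m] [DecidableEq m]
    (A : Matrix m m ℂ) (t : ℝ) : Matrix m m ℂ :=
  if t = 0 then 1 else if t = 1 then A else
    Matrix.of fun i j => ∫ s in Set.Ioi (0 : ℝ),
      (((Real.sin (t * Real.pi) / Real.pi) * s ^ (t - 1)) •
        (A * (A + (s : ℂ) • (1 : Matrix m m ℂ))⁻¹)) i j

/-- The weighted geometric mean `A ♯ₜ B = A^(1/2) (A^(-1/2) B A^(-1/2))^t A^(1/2)`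
of (strictly accretive) matrices. -/
noncomputable def gmean {m : Type*} [Fintype m] [DecidableEq m]
    (A : Matrix m m ℂ) (t : ℝ) (B : Matrix m m ℂ) : Matrix m m ℂ :=
  apow A (1/2) * apow ((apow A (1/2))⁻¹ * B * (apow A (1/2))⁻¹) t * apow A (1/2)

/-- The absolute value `|X| = (Xᴴ X)^(1/2)` of a matrix. -/
noncomputable def absM {m : Type*} [Fintype m] [DecidableEq m]
    (X : Matrix m m ℂ) : Matrix m m ℂ :=
  ((Matrix.posSemidef_conjTranspose_mul_self X).1.eigenvectorUnitary : Matrix m m ℂ) *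
    Matrix.diagonal ((↑) ∘ Real.sqrt ∘ (Matrix.posSemidef_conjTranspose_mul_self X).1.eigenvalues) *
    (star (Matrix.posSemidef_conjTranspose_mul_self X).1.eigenvectorUnitary : Matrix m m ℂ)

/-- The `j`-th largest singular value of a complex matrix. -/
noncomputable def singVals {k : ℕ} (T : Matrix (Fin k) (Fin k) ℂ) (j : Fin k) : ℝ :=
  Real.sqrt (((Matrix.posSemidef_conjTranspose_mul_self T).1.eigenvalues ∘
    Tuple.sort (Matrix.posSemidef_conjTranspose_mul_self T).1.eigenvalues) j.rev)

/-- The `j`-th largest eigenvalue of a Hermitian matrix (junk value `0` otherwise). -/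
noncomputable def eigDesc {k : ℕ} (T : Matrix (Fin k) (Fin k) ℂ) (j : Fin k) : ℝ :=
  if h : T.IsHermitian then (h.eigenvalues ∘ Tuple.sort h.eigenvalues) j.rev else 0

/-- The numerical range of `A` lies in the sector
`S_α = {z : Re z ≥ 0, |Im z| ≤ tan α · Re z}`. -/
def InSector {k : ℕ} (α : ℝ) (A : Matrix (Fin k) (Fin k) ℂ) : Prop :=
  ∀ x : EuclideanSpace ℂ (Fin k), ‖x‖ = 1 →
    0 ≤ (star (x : Fin k → ℂ) ⬝ᵥ A.mulVec (x : Fin k → ℂ)).re ∧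
      |(star (x : Fin k → ℂ) ⬝ᵥ A.mulVec (x : Fin k → ℂ)).im| ≤
        Real.tan α * (star (x : Fin k → ℂ) ⬝ᵥ A.mulVec (x : Fin k → ℂ)).re

/-- If `A` is strictly accretive and not Hermitian, then
`[[A, I], [I, A⁻¹]]` is not accretive. -/
theorem stmt3 {n : ℕ} (A : Matrix (Fin n) (Fin n) ℂ)
    (hA : (mre A).PosDef) (hnh : ¬ A.IsHermitian) :
    ¬ Accretive (Matrix.fromBlocks A (1 : Matrix (Fin n) (Fin n) ℂ)
      (1 : Matrix (Fin n) (Fin n) ℂ) A⁻¹) := by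
  intro hacc
  set H : Matrix (Fin n) (Fin n) ℂ := mre A with hHdef
  have hHH : H.IsHermitian := hA.1
  have hHdet : IsUnit H.det := (Matrix.isUnit_iff_isUnit_det _).1 hA.isUnit
  -- A is invertible
  have hAdet : IsUnit A.det := by
    by_contra h
    have hdz : A.det = 0 := by
      rcases eq_or_ne A.det 0 with h0 | h0
      · exact h0
      · exact absurd (IsUnit.mk0 _ h0) h
    obtain ⟨v, hv, hv0⟩ := Matrix.exists_mulVec_eq_zero_iff.2 hdz
    have hpos := hA.dotProduct_mulVec_pos hv
    have : star v ⬝ᵥ H *ᵥ v = 0 := by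
      have h1 : star v ⬝ᵥ A *ᵥ v = 0 := by rw [hv0, dotProduct_zero]
      have h2 : star v ⬝ᵥ Aᴴ *ᵥ v = 0 := by
        rw [Matrix.dotProduct_mulVec, ← Matrix.star_mulVec, hv0]
        simp
      simp only [hHdef, mre, Matrix.smul_mulVec, Matrix.add_mulVec,
        dotProduct_smul, dotProduct_add, h1, h2]
      simp
    rw [this] at hpos
    exact lt_irrefl _ hpos
  have h1 : H * H⁻¹ = 1 := Matrix.mul_nonsing_inv H hHdet
  have h2 : H⁻¹ * H = 1 := Matrix.nonsing_inv_mul H hHdet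
  have hA1 : A * A⁻¹ = 1 := Matrix.mul_nonsing_inv A hAdet
  have hA2 : A⁻¹ * A = 1 := Matrix.nonsing_inv_mul A hAdet
  have hPH : H⁻¹ᴴ = H⁻¹ := by
    rw [Matrix.conjTranspose_nonsing_inv, hHH.eq]
  set K : Matrix (Fin n) (Fin n) ℂ := (1/2 : ℂ) • (A - Aᴴ) with hKdef
  have hKH : Kᴴ = -K := by
    ext i j
    simp [hKdef, Matrix.conjTranspose_apply, Matrix.smul_apply, Matrix.sub_apply]
    ring
  have hAHK : A = H + K := by
    ext i j
    simp [hHdef, hKdef, mre, Matrix.add_apply, Matrix.sub_apply, Matrix.smul_apply,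
      Matrix.conjTranspose_apply]
    ring
  have hAHK' : Aᴴ = H - K := by
    ext i j
    simp [hHdef, hKdef, mre, Matrix.add_apply, Matrix.sub_apply, Matrix.smul_apply,
      Matrix.conjTranspose_apply]
    ring
  -- K ≠ 0
  have hK0 : K ≠ 0 := by
    intro h
    apply hnh
    show Aᴴ = A
    rw [hAHK', hAHK, h, sub_zero, add_zero]
  obtain ⟨i0, j0, hij⟩ : ∃ i j, K i j ≠ 0 := by
    by_contra h
    push_neg at h
    exact hK0 (Matrix.ext fun i j => h i j)
  set z : Fin n → ℂ := Pi.single j0 1 with hzdef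
  set w : Fin n → ℂ := K *ᵥ z with hwdef
  have hw : w ≠ 0 := by
    intro h
    apply hij
    have := congrFun h i0
    simpa [hwdef, hzdef] using this
  set P : Matrix (Fin n) (Fin n) ℂ := H⁻¹ with hPdef
  set S : Matrix (Fin n) (Fin n) ℂ := Kᴴ * P * K with hSdef
  have hSH : Sᴴ = S := by
    simp only [hSdef, Matrix.conjTranspose_mul, Matrix.conjTranspose_conjTranspose, hPH]
    rw [Matrix.mul_assoc]
  set N : Matrix (Fin n) (Fin n) ℂ := Aᴴ * P * A with hNdef
  have hNH : Nᴴ = N := by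
    simp only [hNdef, Matrix.conjTranspose_mul, Matrix.conjTranspose_conjTranspose, hPH]
    rw [Matrix.mul_assoc]
  have hNS : N = H + S := by
    rw [hNdef, hSdef, hKH, hAHK', (by rw [hAHK] : A = H + K)]
    have expand : (H - K) * P * (H + K) =
        H * P * H + H * P * K - K * P * H - K * P * K := by noncomm_ring
    have expand2 : H + -K * P * K = H + K - K - K * P * K := by noncomm_ring
    rw [expand, expand2, h1, mul_assoc K P H, h2, mul_one, one_mul, one_mul]
  -- the Schur complement condition from accretivity
  have hDm : (mre A⁻¹ - P).PosSemidef := by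
    have hmre : mre (Matrix.fromBlocks A (1 : Matrix (Fin n) (Fin n) ℂ) 1 A⁻¹) =
        Matrix.fromBlocks H (1 : Matrix (Fin n) (Fin n) ℂ) (1 : Matrix (Fin n) (Fin n) ℂ)ᴴ
          (mre A⁻¹) := by
      rw [mre, Matrix.fromBlocks_conjTranspose, Matrix.fromBlocks_add,
        Matrix.fromBlocks_smul, Matrix.fromBlocks_inj]
      refine ⟨rfl, ?_, ?_, rfl⟩ <;>
      · rw [Matrix.conjTranspose_one, ← two_smul ℂ (1 : Matrix (Fin n) (Fin n) ℂ), smul_smul]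
        norm_num
    haveI : Invertible H := hA.isUnit.invertible
    have := (Matrix.PosDef.fromBlocks₁₁ (1 : Matrix (Fin n) (Fin n) ℂ)
      (mre A⁻¹) hA).1 (by rw [← hmre]; exact hacc)
    simpa [hPdef] using this
  -- key matrix identity
  have hkey : Nᴴ * (mre A⁻¹ - P) * N = -(S + S * P * S) := by
    have hAHdet : IsUnit Aᴴ.det := by
      rw [Matrix.det_conjTranspose]
      exact hAdet.star
    have hA3 : Aᴴ * Aᴴ⁻¹ = 1 := Matrix.mul_nonsing_inv _ hAHdet
    have hA4 : Aᴴ⁻¹ * Aᴴ = 1 := Matrix.nonsing_inv_mul _ hAHdet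
    have hmreinv : mre A⁻¹ = A⁻¹ * H * Aᴴ⁻¹ := by
      rw [hHdef, mre, mre, Matrix.mul_smul, Matrix.smul_mul, Matrix.mul_add,
        Matrix.add_mul, hA2, one_mul, mul_assoc, hA3, mul_one,
        Matrix.conjTranspose_nonsing_inv, add_comm]
    have e1 : N * (A⁻¹ * H * Aᴴ⁻¹) * N = N := by
      rw [hNdef]
      calc Aᴴ * P * A * (A⁻¹ * H * Aᴴ⁻¹) * (Aᴴ * P * A)
          = Aᴴ * P * (A * A⁻¹) * H * (Aᴴ⁻¹ * Aᴴ) * P * A := by noncomm_ring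
        _ = Aᴴ * (P * H * P) * A := by rw [hA1, hA4, mul_one, mul_one]; noncomm_ring
        _ = Aᴴ * P * A := by rw [show P * H * P = P by rw [h2, one_mul]]
    have e2 : N * P * N = H + S + S + S * P * S := by
      rw [hNS]
      calc (H + S) * P * (H + S)
          = H * P * H + H * P * S + S * (P * H) + S * P * S := by noncomm_ring
        _ = H + S + S + S * P * S := by
            rw [h1, h2, one_mul, one_mul, mul_one]
    rw [hNH, Matrix.mul_sub, Matrix.sub_mul, hmreinv, e1, e2, hNS]
    noncomm_ring
  -- evaluate the quadratic form at y = N z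
  set y : Fin n → ℂ := N *ᵥ z with hydef
  have quadform : ∀ (M : Matrix (Fin n) (Fin n) ℂ) (Q : Matrix (Fin n) (Fin n) ℂ)
      (v : Fin n → ℂ), star (M *ᵥ v) ⬝ᵥ Q *ᵥ (M *ᵥ v) = star v ⬝ᵥ (Mᴴ * Q * M) *ᵥ v := by
    intro M Q v
    rw [mul_assoc, ← Matrix.mulVec_mulVec, ← Matrix.mulVec_mulVec,
      Matrix.dotProduct_mulVec (star v), ← Matrix.star_mulVec]
  have hval : star y ⬝ᵥ (mre A⁻¹ - P) *ᵥ y = star z ⬝ᵥ (-(S + S * P * S)) *ᵥ z := by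
    rw [hydef, quadform, hkey]
  have ht1 : (0 : ℂ) < star z ⬝ᵥ S *ᵥ z := by
    have : star z ⬝ᵥ S *ᵥ z = star w ⬝ᵥ P *ᵥ w := by
      rw [hSdef, hwdef, quadform]
    rw [this]
    exact hA.inv.dotProduct_mulVec_pos hw
  have ht2 : (0 : ℂ) ≤ star z ⬝ᵥ (S * P * S) *ᵥ z := by
    have : star z ⬝ᵥ (S * P * S) *ᵥ z = star (S *ᵥ z) ⬝ᵥ P *ᵥ (S *ᵥ z) := by
      rw [quadform, hSH]
    rw [this]
    exact hA.inv.posSemidef.dotProduct_mulVec_nonneg _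
  have hneg : star y ⬝ᵥ (mre A⁻¹ - P) *ᵥ y < 0 := by
    rw [hval, Matrix.neg_mulVec, dotProduct_neg, neg_lt_zero,
      Matrix.add_mulVec, dotProduct_add]
    exact add_pos_of_pos_of_nonneg ht1 ht2
  exact absurd hneg (hDm.dotProduct_mulVec_nonneg y).not_gt
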